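/- Let p be a prime, n, m ≥ 1, and let f ∈ (ZMod (p^n))[X] be a monic polynomial of degree m whose image under coefficient-wise reduction modulo p is irreducible in (ZMod p)[X]. Then the quotient ring GR(p^n,m) := (ZMod (p^n))[X] ⧸ (ideal generated by f) is a local ring, and its maximal ideal is the ideal generated by (the image of) p. -/

import Mathlib

open Polynomial

/-- The Galois ring `GR(p^n, m) = (ZMod (p^n))[X] ⧸ (f)`, for `f` a monic
basic irreducible polynomial of degree `m`, is a local ring whose maximal ideal is
generated by `p`. -/
theorem galois_ring_isLocalRing (p n m : ℕ) (hp : p.Prime) (hn : 0 < n) (hm : 0 < m)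
    (f : Polynomial (ZMod (p ^ n))) (hf : f.Monic) (hdeg : f.natDegree = m)
    (hirr : Irreducible (f.map (ZMod.castHom (dvd_pow_self p hn.ne') (ZMod p)))) :
    ∃ _ : IsLocalRing (AdjoinRoot f),
      IsLocalRing.maximalIdeal (AdjoinRoot f) = Ideal.span {(p : AdjoinRoot f)} := by
  haveI : Fact p.Prime := ⟨hp⟩
  haveI : NeZero (p ^ n) := ⟨pow_ne_zero n hp.ne_zero⟩
  set c : ZMod (p ^ n) →+* ZMod p := ZMod.castHom (dvd_pow_self p hn.ne') (ZMod p) with hc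
  set I : Ideal (ZMod (p ^ n)) := Ideal.span {(p : ZMod (p ^ n))} with hI
  -- kernel of reduction mod p
  have hker : RingHom.ker c = I := by
    ext x
    constructor
    · intro hx
      have hx0 : ((x.val : ℕ) : ZMod p) = 0 := by
        have : c x = 0 := hx
        rwa [hc, ZMod.castHom_apply, ← ZMod.natCast_val] at this
      obtain ⟨k, hk⟩ := (ZMod.natCast_eq_zero_iff _ _).mp hx0
      have : x = ((x.val : ℕ) : ZMod (p ^ n)) := (ZMod.natCast_zmod_val x).symm
      rw [this, hk]
      push_cast
      exact Ideal.mem_span_singleton.mpr ⟨(k : ZMod (p ^ n)), rfl⟩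
    · intro hx
      obtain ⟨k, hk⟩ := Ideal.mem_span_singleton.mp hx
      have : c x = 0 := by
        rw [hk, map_mul, map_natCast, ZMod.natCast_self, zero_mul]
      exact this
  have hcsurj : Function.Surjective c := by
    intro y
    obtain ⟨k, rfl⟩ := ZMod.natCast_zmod_surjective y
    exact ⟨(k : ZMod (p ^ n)), map_natCast c k⟩
  -- the isomorphism `ZMod (p^n) ⧸ (p) ≃+* ZMod p`
  set e : (ZMod (p ^ n) ⧸ I) ≃+* ZMod p :=
    (Ideal.quotEquivOfEq hker.symm).trans (RingHom.quotientKerEquivOfSurjective hcsurj) with he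
  have hecomm : ∀ x : ZMod (p ^ n), e (Ideal.Quotient.mk I x) = c x := by
    intro x
    rfl
  -- the composed ring hom `e ∘ mk I` equals `c`
  have hcomp : (e : ZMod (p ^ n) ⧸ I →+* ZMod p).comp (Ideal.Quotient.mk I) = c := by
    ext x
    exact hecomm x
  -- map the polynomial quotient across `e`
  have hmapf : (f.map (Ideal.Quotient.mk I)).map (e : ZMod (p ^ n) ⧸ I →+* ZMod p)
      = f.map c := by
    rw [Polynomial.map_map, hcomp]
  set e3 : ((ZMod (p ^ n) ⧸ I)[X] ⧸ Ideal.span {f.map (Ideal.Quotient.mk I)}) ≃+*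
      ((ZMod p)[X] ⧸ Ideal.span {f.map c}) :=
    Ideal.quotientEquiv _ _ (Polynomial.mapEquiv e)
      (by simp only [Ideal.map_span, Set.image_singleton, RingEquiv.coe_toRingHom,
            Polynomial.mapEquiv_apply, hmapf]) with he3
  -- identify the span of `p` in `AdjoinRoot f` with the map of `I`
  have h1 : Ideal.span {(p : AdjoinRoot f)} = I.map (AdjoinRoot.of f) := by
    rw [hI, Ideal.map_span, Set.image_singleton, map_natCast]
  -- full equivalence
  set E : (AdjoinRoot f ⧸ Ideal.span {(p : AdjoinRoot f)}) ≃+*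
      ((ZMod p)[X] ⧸ Ideal.span {f.map c}) :=
    (Ideal.quotEquivOfEq h1).trans
      ((AdjoinRoot.quotAdjoinRootEquivQuotPolynomialQuot I f).trans e3) with hE
  -- the target is a field
  have hmaxf : (Ideal.span {f.map c}).IsMaximal :=
    PrincipalIdealRing.isMaximal_of_irreducible hirr
  haveI := hmaxf
  have hfield : IsField ((ZMod p)[X] ⧸ Ideal.span {f.map c}) :=
    (Ideal.Quotient.field _).toIsField
  have hmaxP : (Ideal.span {(p : AdjoinRoot f)}).IsMaximal :=
    Ideal.Quotient.maximal_of_isField _ (E.toMulEquiv.isField hfield)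
  -- `p` is nilpotent in `AdjoinRoot f`
  have hpnil : (p : AdjoinRoot f) ^ n = 0 := by
    rw [← Nat.cast_pow, ← map_natCast (AdjoinRoot.of f), ZMod.natCast_self, map_zero]
  -- every maximal ideal equals `span {p}`
  have huniq : ∀ M : Ideal (AdjoinRoot f), M.IsMaximal →
      M = Ideal.span {(p : AdjoinRoot f)} := by
    intro M hM
    have hpM : (p : AdjoinRoot f) ∈ M :=
      hM.isPrime.mem_of_pow_mem n (by rw [hpnil]; exact M.zero_mem)
    exact (hmaxP.eq_of_le hM.ne_top (Ideal.span_le.mpr (by simpa using hpM))).symm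
  have hloc : IsLocalRing (AdjoinRoot f) :=
    IsLocalRing.of_unique_max_ideal ⟨Ideal.span {(p : AdjoinRoot f)}, hmaxP, huniq⟩
  exact ⟨hloc, (IsLocalRing.eq_maximalIdeal hmaxP).symm⟩
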